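/- For the basic triangle T_b = T((0,0),(1,0),(c₁,c₂)) with 0 < c₁ ≤ 1/2, c₂ > 0, and for 1 ≤ r < 3/2, the set 𝒯_r = {(x,y) ∈ T_b : y ≥ c₂(r−1)/r, y ≤ c₂(1−rx)/(r(1−c₁)), y ≤ c₂(r(x−1)+1)/(r c₁)} is the triangle with vertices ((r−1)(1+c₁)/r, c₂(r−1)/r), ((2−r+c₁(r−1))/r, c₂(r−1)/r), and ((c₁(2−r)+r−1)/r, c₂(2−r)/r). -/

import Mathlib

open Set

private lemma mem_hull3 {A B C p : ℝ × ℝ} {a b c : ℝ}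
    (ha : 0 ≤ a) (hb : 0 ≤ b) (hc : 0 ≤ c) (habc : a + b + c = 1)
    (hp : p = a • A + b • B + c • C) :
    p ∈ convexHull ℝ ({A, B, C} : Set (ℝ × ℝ)) := by
  have h := Finset.centerMass_mem_convexHull (t := (Finset.univ : Finset (Fin 3)))
    (w := ![a, b, c]) (z := ![A, B, C]) (s := ({A, B, C} : Set (ℝ × ℝ)))
    (by intro i _; fin_cases i <;> simpa)
    (by simp [Fin.sum_univ_three, habc])
    (by intro i _; fin_cases i <;> simp [Set.mem_insert_iff])
  have he : (Finset.univ : Finset (Fin 3)).centerMass ![a,b,c] ![A,B,C] = p := by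
    rw [Finset.centerMass]
    simp [Fin.sum_univ_three, habc, hp]
  rwa [he] at h

set_option maxHeartbeats 1000000 in
/-- For the basic triangle `T_b = T((0,0),(1,0),(c₁,c₂))` with `0 < c₁ ≤ 1/2`, `c₂ > 0`,
and for `1 ≤ r < 3/2`, the set
`𝒯_r = {(x,y) ∈ T_b : y ≥ c₂(r−1)/r, y ≤ c₂(1−rx)/(r(1−c₁)), y ≤ c₂(r(x−1)+1)/(r c₁)}`
is the triangle (convex hull) with vertices `((r−1)(1+c₁)/r, c₂(r−1)/r)`,
`((2−r+c₁(r−1))/r, c₂(r−1)/r)` and `((c₁(2−r)+r−1)/r, c₂(2−r)/r)`. -/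
theorem Tr_eq_triangle_in_basic_triangle
    (c₁ c₂ r : ℝ) (hc₁ : 0 < c₁) (hc₁' : c₁ ≤ 1 / 2) (hc₂ : 0 < c₂)
    (hr : 1 ≤ r) (hr' : r < 3 / 2)
    (Tb : Set (ℝ × ℝ))
    (hTb : Tb = convexHull ℝ {((0 : ℝ), (0 : ℝ)), (1, 0), (c₁, c₂)}) :
    {p : ℝ × ℝ | p ∈ Tb ∧ c₂ * (r - 1) / r ≤ p.2 ∧
        p.2 ≤ c₂ * (1 - r * p.1) / (r * (1 - c₁)) ∧
        p.2 ≤ c₂ * (r * (p.1 - 1) + 1) / (r * c₁)} =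
      convexHull ℝ {((r - 1) * (1 + c₁) / r, c₂ * (r - 1) / r),
        ((2 - r + c₁ * (r - 1)) / r, c₂ * (r - 1) / r),
        ((c₁ * (2 - r) + r - 1) / r, c₂ * (2 - r) / r)} := by
  have hr0 : (0 : ℝ) < r := lt_of_lt_of_le one_pos hr
  have h1c : (0 : ℝ) < 1 - c₁ := by linarith
  have h32 : (0 : ℝ) < 3 - 2 * r := by linarith
  have hD : (0 : ℝ) < c₂ * (3 - 2 * r) := by positivity
  have hrc : (0 : ℝ) < r * (1 - c₁) := by positivity
  have hrc₁ : (0 : ℝ) < r * c₁ := by positivity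
  have hTbc : Convex ℝ Tb := hTb ▸ convex_convexHull ℝ _
  apply Set.Subset.antisymm
  · -- forward: inequalities give barycentric coordinates w.r.t. the three vertices
    rintro ⟨x, y⟩ ⟨_, h1, h2, h3⟩
    simp only at h1 h2 h3
    rw [div_le_iff₀ hr0] at h1
    rw [le_div_iff₀ hrc] at h2
    rw [le_div_iff₀ hrc₁] at h3
    refine mem_hull3 (A := ((r - 1) * (1 + c₁) / r, c₂ * (r - 1) / r))
      (B := ((2 - r + c₁ * (r - 1)) / r, c₂ * (r - 1) / r))
      (C := ((c₁ * (2 - r) + r - 1) / r, c₂ * (2 - r) / r))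
      (a := (c₂ - c₂ * r * x - r * (1 - c₁) * y) / (c₂ * (3 - 2 * r)))
      (b := (c₂ * (r * (x - 1) + 1) - r * c₁ * y) / (c₂ * (3 - 2 * r)))
      (c := (r * y - c₂ * (r - 1)) / (c₂ * (3 - 2 * r)))
      ?_ ?_ ?_ ?_ ?_
    · apply div_nonneg _ hD.le; nlinarith
    · apply div_nonneg _ hD.le; nlinarith
    · apply div_nonneg _ hD.le; nlinarith
    · field_simp [hD.ne', hc₂.ne', h32.ne']
      have h32'' : (3:ℝ) - r * 2 ≠ 0 := by linarith
      ring_nf; field_simp; ring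
    · simp only [Prod.smul_mk, Prod.mk_add_mk, smul_eq_mul, Prod.mk.injEq]
      constructor
      · field_simp [hD.ne', hc₂.ne', h32.ne']
        have h32'' : (3:ℝ) - r * 2 ≠ 0 := by linarith
        ring_nf; field_simp
      · field_simp [hD.ne', hc₂.ne', h32.ne']
        have h32'' : (3:ℝ) - r * 2 ≠ 0 := by linarith
        ring_nf; field_simp
  · -- backward: the three vertices lie in the set, and the set is convex
    apply convexHull_min
    · rintro q hq
      simp only [Set.mem_insert_iff, Set.mem_singleton_iff] at hq
      have hmem : ∀ u v w : ℝ, 0 ≤ u → 0 ≤ v → 0 ≤ w → u + v + w = 1 →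
          ∀ q : ℝ × ℝ, q = u • ((0:ℝ),(0:ℝ)) + v • ((1:ℝ),(0:ℝ)) + w • (c₁, c₂) →
          q ∈ Tb := by
        intro u v w hu hv hw huvw q hq
        rw [hTb]
        exact mem_hull3 hu hv hw huvw hq
      rcases hq with h | h | h <;> subst h
      · refine ⟨hmem ((2-r)/r) ((r-1)/r) ((r-1)/r)
          (div_nonneg (by linarith) hr0.le) (div_nonneg (by linarith) hr0.le)
          (div_nonneg (by linarith) hr0.le)
          (by field_simp; ring) _ ?_, ?_, ?_, ?_⟩
        · simp only [Prod.smul_mk, Prod.mk_add_mk, smul_eq_mul, Prod.mk.injEq]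
          constructor <;> (field_simp; ring)
        · simp
        · simp only
          rw [div_le_div_iff₀ hr0 hrc]
          field_simp
          nlinarith [mul_pos (mul_pos hc₂ hr0) h32, mul_pos hc₂ hr0, hc₂.le, h32.le]
        · simp only
          rw [div_le_div_iff₀ hr0 hrc₁]
          field_simp
          nlinarith [mul_pos (mul_pos hc₂ hr0) h32, mul_pos hc₂ hr0, hc₂.le, h32.le]
      · refine ⟨hmem ((r-1)/r) ((2-r)/r) ((r-1)/r)
          (div_nonneg (by linarith) hr0.le) (div_nonneg (by linarith) hr0.le)
          (div_nonneg (by linarith) hr0.le)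
          (by field_simp; ring) _ ?_, ?_, ?_, ?_⟩
        · simp only [Prod.smul_mk, Prod.mk_add_mk, smul_eq_mul, Prod.mk.injEq]
          constructor <;> (field_simp; ring)
        · simp
        · simp only
          rw [div_le_div_iff₀ hr0 hrc]
          field_simp
          nlinarith [mul_pos (mul_pos hc₂ hr0) h32, mul_pos hc₂ hr0, hc₂.le, h32.le]
        · simp only
          rw [div_le_div_iff₀ hr0 hrc₁]
          field_simp
          nlinarith [mul_pos (mul_pos hc₂ hr0) h32, mul_pos hc₂ hr0, hc₂.le, h32.le]
      · refine ⟨hmem ((r-1)/r) ((r-1)/r) ((2-r)/r)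
          (div_nonneg (by linarith) hr0.le) (div_nonneg (by linarith) hr0.le)
          (div_nonneg (by linarith) hr0.le)
          (by field_simp; ring) _ ?_, ?_, ?_, ?_⟩
        · simp only [Prod.smul_mk, Prod.mk_add_mk, smul_eq_mul, Prod.mk.injEq]
          constructor <;> (field_simp; ring)
        · simp only
          rw [div_le_div_iff₀ hr0 hr0]
          nlinarith [mul_pos (mul_pos hc₂ hr0) h32, mul_pos hc₂ hr0]
        · simp only
          rw [div_le_div_iff₀ hr0 hrc]
          field_simp
          nlinarith [mul_pos (mul_pos hc₂ hr0) h32, mul_pos hc₂ hr0, hc₂.le, h32.le]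
        · simp only
          rw [div_le_div_iff₀ hr0 hrc₁]
          field_simp
          nlinarith [mul_pos (mul_pos hc₂ hr0) h32, mul_pos hc₂ hr0, hc₂.le, h32.le]
    · intro p hp q hq a b ha hb hab
      obtain ⟨hpT, hp1, hp2, hp3⟩ := hp
      obtain ⟨hqT, hq1, hq2, hq3⟩ := hq
      have habK : ∀ K : ℝ, a * K + b * K = K := fun K => by
        rw [← add_mul, hab, one_mul]
      refine ⟨hTbc hpT hqT ha hb hab, ?_, ?_, ?_⟩
      all_goals simp only [Prod.fst_add, Prod.snd_add, Prod.smul_fst, Prod.smul_snd,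
        smul_eq_mul]
      · linarith [mul_le_mul_of_nonneg_left hp1 ha, mul_le_mul_of_nonneg_left hq1 hb,
          habK (c₂ * (r - 1) / r)]
      · rw [le_div_iff₀ hrc] at hp2 hq2 ⊢
        linarith [mul_le_mul_of_nonneg_left hp2 ha, mul_le_mul_of_nonneg_left hq2 hb,
          habK c₂, habK (c₂ * r)]
      · rw [le_div_iff₀ hrc₁] at hp3 hq3 ⊢
        linarith [mul_le_mul_of_nonneg_left hp3 ha, mul_le_mul_of_nonneg_left hq3 hb,
          habK c₂, habK (c₂ * r)]
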